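/- Let G be a chordal graph (a graph with no induced cycle of length at least 4) and let A, B ⊆ V(G). Then the CC-Piran graph Π^cc(A, B) is even-hole-free, i.e., it contains no induced cycle of even length at least 4. -/

import Mathlib

open scoped Classical

noncomputable section

/-- `U` induces a connected subgraph of `G`. -/
def IsConnSub {V : Type*} (G : SimpleGraph V) (U : Finset V) : Prop :=
  (G.induce (U : Set V)).Connected

/-- The set of connected components of a vertex subset `U`:
maximal subsets of `U` inducing connected subgraphs. -/
def comps {V : Type*} [Fintype V] [DecidableEq V] (G : SimpleGraph V) (U : Finset V) :
    Finset (Finset V) :=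
  Finset.univ.filter (fun C => C ⊆ U ∧ IsConnSub G C ∧
    ∀ D : Finset V, C ⊆ D → D ⊆ U → IsConnSub G D → D = C)

/-- The CC-multiset of `U`: the multiset of sizes of connected components of `U`. -/
def ccMultiset {V : Type*} [Fintype V] [DecidableEq V] (G : SimpleGraph V) (U : Finset V) :
    Multiset ℕ :=
  (comps G U).val.map Finset.card

/-- Adjacency under component jumping (CJ). -/
def adjCJ {V : Type*} [Fintype V] [DecidableEq V] (G : SimpleGraph V) (U U' : Finset V) : Prop :=
  ccMultiset G U = ccMultiset G U' ∧
  (comps G U \ comps G U').card = 1 ∧ (comps G U' \ comps G U).card = 1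

/-- Adjacency under component sliding (CS). -/
def adjCS {V : Type*} [Fintype V] [DecidableEq V] (G : SimpleGraph V) (U U' : Finset V) : Prop :=
  adjCJ G U U' ∧
  ∀ C ∈ comps G U \ comps G U', ∀ C' ∈ comps G U' \ comps G U, IsConnSub G (C ∪ C')

/-- Adjacency under CS1 (component sliding by one vertex). -/
def adjCS1 {V : Type*} [Fintype V] [DecidableEq V] (G : SimpleGraph V) (U U' : Finset V) : Prop :=
  adjCS G U U' ∧
  ∀ C ∈ comps G U \ comps G U', ∀ C' ∈ comps G U' \ comps G U,
    (C \ C').card = 1 ∧ (C' \ C).card = 1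

/-- Adjacency under token jumping (TJ). -/
def adjTJ {V : Type*} [DecidableEq V] (G : SimpleGraph V) (U U' : Finset V) : Prop :=
  (U \ U').card = 1 ∧ (U' \ U).card = 1

/-- `A` and `B` are reconfigurable under rule `R` keeping the CC-multiset equal to `M`. -/
def Reconf {V : Type*} [Fintype V] [DecidableEq V] (G : SimpleGraph V) (M : Multiset ℕ)
    (R : Finset V → Finset V → Prop) (A B : Finset V) : Prop :=
  ∃ (ℓ : ℕ) (W : ℕ → Finset V), W 0 = A ∧ W ℓ = B ∧
    (∀ i ≤ ℓ, ccMultiset G (W i) = M) ∧ ∀ i < ℓ, R (W i) (W (i + 1))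

end

/-- The vertex set of the CC-Piran graph: connected components of `A` that are not
components of `B`, together with components of `B` that are not components of `A`. -/
noncomputable def ccPiranVerts {V : Type*} [Fintype V] [DecidableEq V] (G : SimpleGraph V)
    (A B : Finset V) : Finset (Finset V) :=
  (comps G A \ comps G B) ∪ (comps G B \ comps G A)

/-- The CC-Piran graph `Π^cc(A, B)`: vertices are the components in the symmetric
difference of `C(A)` and `C(B)`; a component of `C(A) \ C(B)` is joined to a component
of `C(B) \ C(A)` whenever the two touch. -/
noncomputable def ccPiran {V : Type*} [Fintype V] [DecidableEq V] (G : SimpleGraph V) (A B : Finset V) :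
    SimpleGraph {C : Finset V // C ∈ ccPiranVerts G A B} where
  Adj C D :=
    ((C.1 ∈ comps G A \ comps G B ∧ D.1 ∈ comps G B \ comps G A) ∨
     (D.1 ∈ comps G A \ comps G B ∧ C.1 ∈ comps G B \ comps G A)) ∧
    IsConnSub G (C.1 ∪ D.1)
  symm := by
    constructor
    rintro C D ⟨h1, h2⟩
    exact ⟨h1.symm, by rwa [Finset.union_comm]⟩
  loopless := by
    constructor
    rintro C ⟨h1 | h1, _⟩ <;>
      exact (Finset.mem_sdiff.mp h1.1).2 (Finset.mem_sdiff.mp h1.2).1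

section Aux
variable {V : Type*} [DecidableEq V] {G : SimpleGraph V}

/-- Two finsets touch: common vertex or an edge. -/
def Touch (G : SimpleGraph V) (X Y : Finset V) : Prop :=
  (∃ v, v ∈ X ∧ v ∈ Y) ∨ ∃ x ∈ X, ∃ y ∈ Y, G.Adj x y

lemma Touch.symm {X Y : Finset V} (h : Touch G X Y) : Touch G Y X := by
  rcases h with ⟨v, h1, h2⟩ | ⟨x, hx, y, hy, hadj⟩
  · exact Or.inl ⟨v, h2, h1⟩
  · exact Or.inr ⟨y, hy, x, hx, hadj.symm⟩

lemma Touch.mono {X Y X' Y' : Finset V} (h : Touch G X' Y') (hX : X' ⊆ X) (hY : Y' ⊆ Y) :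
    Touch G X Y := by
  rcases h with ⟨v, h1, h2⟩ | ⟨x, hx, y, hy, hadj⟩
  · exact Or.inl ⟨v, hX h1, hY h2⟩
  · exact Or.inr ⟨x, hX hx, y, hY hy, hadj⟩

lemma isConnSub_singleton (G : SimpleGraph V) (v : V) : IsConnSub G {v} := by
  unfold IsConnSub
  rw [SimpleGraph.connected_iff]
  constructor
  · rintro ⟨a, ha⟩ ⟨b, hb⟩
    simp only [Finset.coe_singleton, Set.mem_singleton_iff] at ha hb
    subst ha; subst hb
    exact SimpleGraph.Reachable.refl _
  · exact ⟨⟨v, by simp⟩⟩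

lemma IsConnSub.nonempty {X : Finset V} (h : IsConnSub G X) : X.Nonempty := by
  unfold IsConnSub at h
  obtain ⟨⟨v, hv⟩⟩ := h.nonempty
  exact ⟨v, by simpa using hv⟩

lemma IsConnSub.union_of_touch {X Y : Finset V} (hX : IsConnSub G X) (hY : IsConnSub G Y)
    (h : Touch G X Y) : IsConnSub G (X ∪ Y) := by
  unfold IsConnSub at *
  rw [Finset.coe_union]
  rcases h with ⟨v, h1, h2⟩ | ⟨x, hx, y, hy, hadj⟩
  · exact SimpleGraph.induce_union_connected hX.preconnected hY.preconnected ⟨v, by simp [h1, h2]⟩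
  · exact SimpleGraph.connected_induce_union hX.preconnected hY.preconnected (by simpa using hx) (by simpa using hy) hadj

lemma touch_of_isConnSub_union {X Y : Finset V} (hX : X.Nonempty) (hY : Y.Nonempty)
    (h : IsConnSub G (X ∪ Y)) : Touch G X Y := by
  by_contra hnt
  have hnc : ∀ v, v ∈ X → v ∉ Y := fun v hv hv' => hnt (Or.inl ⟨v, hv, hv'⟩)
  have hne : ∀ x ∈ X, ∀ y ∈ Y, ¬ G.Adj x y := fun x hx y hy ha => hnt (Or.inr ⟨x, hx, y, hy, ha⟩)
  obtain ⟨x, hx⟩ := hX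
  obtain ⟨y, hy⟩ := hY
  have hstay : ∀ (u w : ((X ∪ Y : Finset V) : Set V)) (p : (G.induce _).Walk u w),
      (u : V) ∈ X → (w : V) ∈ X := by
    intro u w p
    induction p with
    | nil => exact id
    | @cons a b c hab p ih =>
      intro haX
      have hbXY : (b : V) ∈ X ∪ Y := by simpa using b.2
      rcases Finset.mem_union.mp hbXY with hbX | hbY
      · exact ih hbX
      · exact absurd hab (by exact fun hadj => hne _ haX _ hbY hadj)
  obtain ⟨p⟩ := h.preconnected ⟨x, by simp [hx]⟩ ⟨y, by simp [hy]⟩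
  exact hnc y (hstay _ _ p hx) hy

end Aux

section Aux2
variable {V : Type*} [DecidableEq V] {G : SimpleGraph V}

private lemma reach_of_support {s t : Set V} :
    ∀ (u v : s) (p : (G.induce s).Walk u v) (hsub : ∀ w ∈ p.support, (w : V) ∈ t),
    (G.induce t).Reachable ⟨u, hsub _ p.start_mem_support⟩ ⟨v, hsub _ p.end_mem_support⟩ := by
  intro u v p
  induction p with
  | nil => intro _; rfl
  | @cons a b c hab p ih =>
    intro hsub
    have h1 : (a : V) ∈ t := hsub _ (SimpleGraph.Walk.start_mem_support _)
    have h2 : (b : V) ∈ t := by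
      apply hsub; simp
    have hadj : (G.induce t).Adj ⟨(a : V), h1⟩ ⟨(b : V), h2⟩ := hab
    refine hadj.reachable.trans ?_
    exact ih (fun w hw => hsub _ (by simp [hw]))

private lemma support_reach {W : Type*} {H : SimpleGraph W} :
    ∀ {u v : W} (p : H.Walk u v) (w : W), w ∈ p.support → H.Reachable u w := by
  intro u v p
  induction p with
  | nil => intro w hw; simp at hw; subst hw; rfl
  | @cons a b c hab p ih =>
    intro w hw
    simp only [SimpleGraph.Walk.support_cons, List.mem_cons] at hw
    rcases hw with rfl | hw
    · rfl
    · exact hab.reachable.trans (ih _ hw)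

/-- Extraction of a connected "component" of `M \ {x}` containing `y` which is
adjacent to `x`. -/
lemma exists_component (M : Finset V) (hM : IsConnSub G M) (x y : V) (hx : x ∈ M)
    (hy : y ∈ M) (hyx : y ≠ x) :
    ∃ M' : Finset V, M' ⊆ M.erase x ∧ y ∈ M' ∧ IsConnSub G M' ∧ ∃ z ∈ M', G.Adj z x := by
  classical
  set E : Finset V := M.erase x with hE
  have hyE : y ∈ E := Finset.mem_erase.mpr ⟨hyx, hy⟩
  set H : SimpleGraph _ := G.induce (E : Set V) with hH
  set M' : Finset V := E.filter (fun z => ∃ hz : z ∈ E, H.Reachable ⟨y, hyE⟩ ⟨z, hz⟩) with hM'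
  have hyM' : y ∈ M' := Finset.mem_filter.mpr ⟨hyE, ⟨hyE, by rfl⟩⟩
  have hsub : M' ⊆ E := Finset.filter_subset _ _
  -- closure under adjacency within E
  have hclose : ∀ z ∈ M', ∀ w ∈ E, G.Adj z w → w ∈ M' := by
    intro z hz w hw hadj
    obtain ⟨hzE, hzE', hreach⟩ := Finset.mem_filter.mp hz
    refine Finset.mem_filter.mpr ⟨hw, hw, ?_⟩
    have : H.Adj ⟨z, hzE'⟩ ⟨w, hw⟩ := hadj
    exact hreach.trans this.reachable
  refine ⟨M', hsub, hyM', ?_, ?_⟩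
  · -- connectivity of M'
    unfold IsConnSub
    rw [SimpleGraph.connected_iff]
    constructor
    · rintro ⟨a, ha⟩ ⟨b, hb⟩
      have haM' : a ∈ M' := by simpa using ha
      have hbM' : b ∈ M' := by simpa using hb
      obtain ⟨haE, haE', hra⟩ := Finset.mem_filter.mp haM'
      obtain ⟨hbE, hbE', hrb⟩ := Finset.mem_filter.mp hbM'
      obtain ⟨p⟩ := hra.symm.trans hrb
      have hsupp : ∀ w ∈ p.support, (w : V) ∈ (M' : Set V) := by
        intro w hw
        have hr : H.Reachable ⟨y, hyE⟩ w := hra.trans (support_reach p _ hw)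
        have hwE : (w : V) ∈ E := by simpa using w.2
        have hwM' : (w : V) ∈ M' := Finset.mem_filter.mpr ⟨hwE, hwE, hr⟩
        simpa using hwM'
      have := reach_of_support _ _ p hsupp
      convert this using 2 <;> rfl
    · exact ⟨⟨y, by simpa using hyM'⟩⟩
  · -- some vertex of M' adjacent to x
    have hxM : (x : V) ∈ (M : Set V) := by simpa using hx
    have hyMs : (y : V) ∈ (M : Set V) := by simpa using hy
    obtain ⟨p⟩ := (id hM : (G.induce (M : Set V)).Connected).preconnected ⟨y, hyMs⟩ ⟨x, hxM⟩
    revert p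
    suffices h : ∀ (u w : (M : Set V)) (p : (G.induce (M : Set V)).Walk u w),
        (w : V) = x → (u : V) ∈ M' → ∃ z ∈ M', G.Adj z x by
      intro p; exact h _ _ p rfl (by simpa using hyM')
    intro u w p
    induction p with
    | nil =>
      intro hwx hu
      rw [hwx] at hu
      exact absurd (Finset.mem_erase.mp (hsub hu)).1 (by simp)
    | @cons a b c hab p ih =>
      intro hwx haM'
      have hadj : G.Adj (a : V) (b : V) := hab
      by_cases hbx : (b : V) = x
      · exact ⟨a, haM', by rwa [hbx] at hadj⟩
      · have hbE : (b : V) ∈ E := Finset.mem_erase.mpr ⟨hbx, by simpa using b.2⟩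
        exact ih hwx (hclose _ haM' _ hbE hadj)

end Aux2

section Aux3
variable {V : Type*} [Fintype V] [DecidableEq V] {G : SimpleGraph V}

lemma fin_val_one {k : ℕ} [NeZero k] (hk : 2 ≤ k) : ((1 : Fin k) : ℕ) = 1 := by
  haveI : NeZero k := ⟨by omega⟩
  rw [Fin.val_one']
  exact Nat.mod_eq_of_lt (by omega)

lemma fin_val_add_one {k : ℕ} [NeZero k] (hk : 2 ≤ k) (i : Fin k) :
    ((i + 1 : Fin k) : ℕ) = if (i : ℕ) + 1 = k then 0 else (i : ℕ) + 1 := by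
  haveI : NeZero k := ⟨by omega⟩
  rw [Fin.add_def, fin_val_one hk]
  split_ifs with h
  · simp [h]
  · exact Nat.mod_eq_of_lt (by omega)

lemma mem_comps_iff {U C : Finset V} : C ∈ comps G U ↔
    C ⊆ U ∧ IsConnSub G C ∧ ∀ D : Finset V, C ⊆ D → D ⊆ U → IsConnSub G D → D = C := by
  simp [comps]

lemma comps_not_touch {U C D : Finset V} (hC : C ∈ comps G U) (hD : D ∈ comps G U)
    (hne : C ≠ D) : ¬ Touch G C D := by
  intro ht
  rw [mem_comps_iff] at hC hD
  have hu : IsConnSub G (C ∪ D) := hC.2.1.union_of_touch hD.2.1 ht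
  have h1 : C ∪ D = C := hC.2.2 _ Finset.subset_union_left
    (Finset.union_subset hC.1 hD.1) hu
  have h2 : C ∪ D = D := hD.2.2 _ Finset.subset_union_right
    (Finset.union_subset hC.1 hD.1) hu
  exact hne (h1 ▸ h2)

end Aux3

section Aux4
variable {V : Type*} [Fintype V] [DecidableEq V] {G : SimpleGraph V}

/-- A cyclic system of blobs: each connected, consecutive ones touch,
non-consecutive ones don't. -/
abbrev BlobSys (G : SimpleGraph V) (k : ℕ) [NeZero k] (S : Fin k → Finset V) : Prop :=
  (∀ i, IsConnSub G (S i)) ∧ (∀ i, Touch G (S i) (S (i + 1))) ∧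
  (∀ i j : Fin k, j ≠ i → j ≠ i + 1 → i ≠ j + 1 → ¬ Touch G (S i) (S j))

lemma fin_succ_ne {k : ℕ} [NeZero k] (hk : 4 ≤ k) (i : Fin k) :
    i + 1 ≠ i ∧ i + 1 + 1 ≠ i ∧ i + 1 + 1 + 1 ≠ i := by
  have h2 : 2 ≤ k := by omega
  have e1 := fin_val_add_one h2 i
  have e2 := fin_val_add_one h2 (i + 1)
  have e3 := fin_val_add_one h2 (i + 1 + 1)
  have hi := i.isLt
  refine ⟨?_, ?_, ?_⟩ <;> intro h <;> rw [Fin.ext_iff] at h <;>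
    split_ifs at e1 e2 e3 <;> omega

lemma blob_base {k : ℕ} [NeZero k] (hk : 4 ≤ k) (S : Fin k → Finset V) (hB : BlobSys G k S)
    (hone : ∀ i, (S i).card = 1) : Nonempty (SimpleGraph.cycleGraph k ↪g G) := by
  haveI : NeZero k := ⟨by omega⟩
  choose w hw using fun i => Finset.card_eq_one.mp (hone i)
  have hair : ∀ i, G.Adj (w i) (w (i + 1)) := by
    intro i
    have ht := hB.2.1 i
    rw [hw i, hw (i + 1)] at ht
    rcases ht with ⟨v, hv1, hv2⟩ | ⟨a, ha, b, hb, hadj⟩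
    · exfalso
      simp only [Finset.mem_singleton] at hv1 hv2
      have heq : S (i + 1) = S i := by rw [hw, hw, ← hv1, ← hv2]
      have ht2 := hB.2.1 (i + 1)
      rw [heq] at ht2
      refine hB.2.2 i (i + 1 + 1) (fin_succ_ne hk i).2.1
        (fun h => (fin_succ_ne hk (i + 1)).1 h) (fun h => (fin_succ_ne hk i).2.2 h.symm) ht2
    · simp only [Finset.mem_singleton] at ha hb
      rwa [ha, hb] at hadj
  have hfar' : ∀ i j, j ≠ i → j ≠ i + 1 → i ≠ j + 1 →
      w i ≠ w j ∧ ¬ G.Adj (w i) (w j) := by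
    intro i j h1 h2 h3
    have hnt := hB.2.2 i j h1 h2 h3
    rw [hw i, hw j] at hnt
    exact ⟨fun h => hnt (Or.inl ⟨w i, by simp, by simp [h]⟩),
      fun h => hnt (Or.inr ⟨w i, by simp, w j, by simp, h⟩)⟩
  have hinj : Function.Injective w := by
    intro i j h
    by_contra hne
    by_cases h2 : j = i + 1
    · subst h2; exact (h ▸ hair i).ne rfl
    · by_cases h3 : i = j + 1
      · subst h3; exact (h ▸ (hair j).symm).ne rfl
      · exact (hfar' i j (fun hh => hne hh.symm) h2 h3).1 h
  have hv1 : ((1 : Fin k) : ℕ) = 1 := fin_val_one (by omega)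
  refine ⟨⟨⟨w, hinj⟩, ?_⟩⟩
  intro u v
  simp only [Function.Embedding.coeFn_mk]
  rw [SimpleGraph.cycleGraph_adj']
  constructor
  · intro hadj
    by_cases huv : u = v
    · exact absurd (huv ▸ hadj) (G.loopless.irrefl _)
    by_cases hc1 : u = v + 1
    · left; subst hc1; rw [add_sub_cancel_left, hv1]
    by_cases hc2 : v = u + 1
    · right; subst hc2; rw [add_sub_cancel_left, hv1]
    · exact absurd hadj (hfar' u v (fun h => huv h.symm) hc2 hc1).2
  · rintro (h | h)
    · have : u = 1 + v := sub_eq_iff_eq_add.mp (Fin.ext (by rw [h, hv1]))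
      rw [add_comm] at this; subst this
      exact (hair v).symm
    · have : v = 1 + u := sub_eq_iff_eq_add.mp (Fin.ext (by rw [h, hv1]))
      rw [add_comm] at this; subst this
      exact hair u

end Aux4

section Aux5
variable {V : Type*} [Fintype V] [DecidableEq V] {G : SimpleGraph V}

lemma BlobSys.rotate {k : ℕ} [NeZero k] (hk : 4 ≤ k) {S : Fin k → Finset V} (hB : BlobSys G k S)
    (c : Fin k) : BlobSys G k (fun i => S (i + c)) := by
  haveI : NeZero k := ⟨by omega⟩
  obtain ⟨h1, h2, h3⟩ := hB
  refine ⟨fun i => h1 _, fun i => ?_, fun i j hji hj1 hi1 => ?_⟩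
  · have h := h2 (i + c)
    rwa [show i + c + 1 = i + 1 + c from add_right_comm _ _ _] at h
  · refine h3 (i + c) (j + c) (fun h => hji (add_right_cancel h)) (fun h => ?_) (fun h => ?_)
    · rw [show i + c + 1 = i + 1 + c from add_right_comm _ _ _] at h
      exact hj1 (add_right_cancel h)
    · rw [show j + c + 1 = j + 1 + c from add_right_comm _ _ _] at h
      exact hi1 (add_right_cancel h)

lemma fin_mk_add_one_val {k : ℕ} [NeZero k] (hk : 2 ≤ k) (a : ℕ) (ha : a < k) :
    ((⟨a, ha⟩ + 1 : Fin k) : ℕ) = if a + 1 = k then 0 else a + 1 := by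
  rw [fin_val_add_one hk]

lemma blob_touch_val {k : ℕ} [NeZero k] (hk : 4 ≤ k) {S : Fin k → Finset V}
    (hB : BlobSys G k S) :
    (∀ a (h : a + 1 < k) (pa : a < k), Touch G (S ⟨a, pa⟩) (S ⟨a + 1, h⟩)) ∧
      ∀ (p : k - 1 < k) (q : 0 < k), Touch G (S ⟨k - 1, p⟩) (S ⟨0, q⟩) := by
  have h2k : 2 ≤ k := by omega
  constructor
  · intro a h pa
    have ht := hB.2.1 ⟨a, pa⟩
    have he : (⟨a, pa⟩ + 1 : Fin k) = ⟨a + 1, h⟩ := by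
      apply Fin.ext
      show ((⟨a, pa⟩ + 1 : Fin k) : ℕ) = a + 1
      rw [fin_mk_add_one_val h2k]
      split_ifs <;> omega
    rwa [he] at ht
  · intro p q
    have ht := hB.2.1 ⟨k - 1, p⟩
    have he : (⟨k - 1, p⟩ + 1 : Fin k) = ⟨0, q⟩ := by
      apply Fin.ext
      show ((⟨k - 1, p⟩ + 1 : Fin k) : ℕ) = 0
      rw [fin_mk_add_one_val h2k]
      split_ifs <;> omega
    rwa [he] at ht

lemma blob_far_val {k : ℕ} [NeZero k] (hk : 4 ≤ k) {S : Fin k → Finset V}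
    (hB : BlobSys G k S) :
    ∀ a b (ha : a < k) (hb : b < k), b ≠ a → b ≠ a + 1 → a ≠ b + 1 →
      ¬(a = 0 ∧ b = k - 1) → ¬(b = 0 ∧ a = k - 1) →
      ¬ Touch G (S ⟨a, ha⟩) (S ⟨b, hb⟩) := by
  have h2k : 2 ≤ k := by omega
  intro a b ha hb hba hb1 ha1 hw1 hw2
  refine hB.2.2 ⟨a, ha⟩ ⟨b, hb⟩ (fun h => hba (congrArg Fin.val h))
    (fun h => ?_) (fun h => ?_)
  · have h' : b = ((⟨a, ha⟩ + 1 : Fin k) : ℕ) := congrArg Fin.val h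
    rw [fin_mk_add_one_val h2k] at h'
    split_ifs at h' <;> omega
  · have h' : a = ((⟨b, hb⟩ + 1 : Fin k) : ℕ) := congrArg Fin.val h
    rw [fin_mk_add_one_val h2k] at h'
    split_ifs at h' <;> omega

lemma blobSys_of_val {k : ℕ} [NeZero k] (hk : 4 ≤ k) (S : Fin k → Finset V)
    (hconn : ∀ i, IsConnSub G (S i))
    (ht1 : ∀ a (h : a + 1 < k) (pa : a < k), Touch G (S ⟨a, pa⟩) (S ⟨a + 1, h⟩))
    (ht2 : ∀ (p : k - 1 < k) (q : 0 < k), Touch G (S ⟨k - 1, p⟩) (S ⟨0, q⟩))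
    (hf : ∀ a b (ha : a < k) (hb : b < k), b ≠ a → b ≠ a + 1 → a ≠ b + 1 →
      ¬(a = 0 ∧ b = k - 1) → ¬(b = 0 ∧ a = k - 1) →
      ¬ Touch G (S ⟨a, ha⟩) (S ⟨b, hb⟩)) :
    BlobSys G k S := by
  have h2k : 2 ≤ k := by omega
  refine ⟨hconn, fun i => ?_, fun i j hji hj1 hi1 => ?_⟩
  · by_cases h : (i : ℕ) + 1 = k
    · have e1 : i = ⟨k - 1, by omega⟩ := by
        apply Fin.ext
        show (i : ℕ) = k - 1
        omega
      have e2 : i + 1 = (⟨0, by omega⟩ : Fin k) := by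
        apply Fin.ext
        show ((i + 1 : Fin k) : ℕ) = 0
        rw [fin_val_add_one h2k]
        simp [h]
      have eS1 := congrArg S e1
      have eS2 := congrArg S e2
      rw [eS1, eS2]
      exact ht2 _ _
    · have e2 : i + 1 = (⟨(i : ℕ) + 1, by omega⟩ : Fin k) := by
        apply Fin.ext
        show ((i + 1 : Fin k) : ℕ) = (i : ℕ) + 1
        rw [fin_val_add_one h2k]
        simp [h]
      rw [congrArg S e2]
      exact ht1 (i : ℕ) _ i.isLt
  · rw [show S i = S ⟨(i : ℕ), i.isLt⟩ from rfl, show S j = S ⟨(j : ℕ), j.isLt⟩ from rfl]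
    have hv1 := fin_val_add_one h2k i
    have hv2 := fin_val_add_one h2k j
    refine hf (i : ℕ) (j : ℕ) i.isLt j.isLt (fun h => hji (Fin.ext h))
      (fun h => ?_) (fun h => ?_) (fun h => ?_) (fun h => ?_)
    · refine hj1 (Fin.ext ?_)
      show (j : ℕ) = ((i + 1 : Fin k) : ℕ)
      rw [hv1]; split_ifs with hh <;> omega
    · refine hi1 (Fin.ext ?_)
      show (i : ℕ) = ((j + 1 : Fin k) : ℕ)
      rw [hv2]; split_ifs with hh <;> omega
    · refine hi1 (Fin.ext ?_)
      show (i : ℕ) = ((j + 1 : Fin k) : ℕ)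
      rw [hv2]; split_ifs with hh <;> omega
    · refine hj1 (Fin.ext ?_)
      show (j : ℕ) = ((i + 1 : Fin k) : ℕ)
      rw [hv1]; split_ifs with hh <;> omega

end Aux5

section Aux6
variable {V : Type*} [Fintype V] [DecidableEq V] {G : SimpleGraph V}

lemma fin_one_eq {k : ℕ} [NeZero k] (hk : 4 ≤ k) (p : 1 < k) : (1 : Fin k) = ⟨1, p⟩ :=
  Fin.ext (by rw [fin_val_one (by omega)])

lemma fin_zero_eq {k : ℕ} [NeZero k] (hk : 4 ≤ k) (p : 0 < k) : (0 : Fin k) = ⟨0, p⟩ :=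
  Fin.ext (Fin.val_zero k)

lemma fin_one_add_one {k : ℕ} [NeZero k] (hk : 4 ≤ k) (p : 2 < k) :
    (1 + 1 : Fin k) = ⟨2, p⟩ := by
  apply Fin.ext
  show ((1 + 1 : Fin k) : ℕ) = 2
  rw [fin_val_add_one (by omega : 2 ≤ k), fin_val_one (by omega : 2 ≤ k)]
  split_ifs <;> omega

lemma blob_shrink {k : ℕ} [NeZero k] (hk : 4 ≤ k) (p2 : 2 < k) (S : Fin k → Finset V)
    (hB : BlobSys G k S)
    (M' : Finset V) (hsub : M' ⊆ S 1) (hconn' : IsConnSub G M')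
    (hL : Touch G (S 0) M') (hR : Touch G M' (S ⟨2, p2⟩)) :
    BlobSys G k (Function.update S 1 M') := by
  have h21 : (⟨2, p2⟩ : Fin k) ≠ 1 := by
    intro h
    have h' : (2 : ℕ) = ((1 : Fin k) : ℕ) := congrArg Fin.val h
    rw [fin_val_one (by omega : 2 ≤ k)] at h'
    omega
  have e11 : (1 + 1 : Fin k) = ⟨2, p2⟩ := fin_one_add_one hk p2
  refine ⟨fun i => ?_, fun i => ?_, fun i j hji hj1 hi1 => ?_⟩
  · by_cases h : i = 1
    · subst h; rwa [Function.update_self]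
    · rw [Function.update_of_ne h]; exact hB.1 i
  · by_cases h : i = 1
    · subst h
      rw [Function.update_self, e11, Function.update_of_ne h21]
      exact hR
    · rw [Function.update_of_ne h]
      by_cases h0 : i = 0
      · subst h0
        rw [zero_add, Function.update_self]
        exact hL
      · have : i + 1 ≠ 1 := by
          intro hh
          apply h0
          have : i + 1 = 0 + 1 := by rw [hh, zero_add]
          exact add_right_cancel this
        rw [Function.update_of_ne this]
        exact hB.2.1 i
  · by_cases hi : i = 1 <;> by_cases hj : j = 1
    · exact absurd (hi.trans hj.symm) (Ne.symm hji)
    · subst hi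
      rw [Function.update_self, Function.update_of_ne hj]
      intro ht
      exact hB.2.2 1 j hji hj1 hi1 (ht.mono hsub le_rfl)
    · subst hj
      rw [Function.update_self, Function.update_of_ne hi]
      intro ht
      exact hB.2.2 i 1 hji hj1 hi1 (ht.mono le_rfl hsub)
    · rw [Function.update_of_ne hi, Function.update_of_ne hj]
      exact hB.2.2 i j hji hj1 hi1

lemma sum_update_card {k : ℕ} (S : Fin k → Finset V) (M' : Finset V) (i0 : Fin k) :
    ∑ i, ((Function.update S i0 M') i).card + (S i0).card
      = ∑ i, (S i).card + M'.card := by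
  classical
  have h1 : ∀ i, ((Function.update S i0 M') i).card
      = Function.update (fun i => (S i).card) i0 M'.card i := by
    intro i
    rw [Function.update_apply, Function.update_apply, apply_ite Finset.card]
  rw [Finset.sum_congr rfl (fun i _ => h1 i)]
  rw [Finset.sum_update_of_mem (Finset.mem_univ i0)]
  rw [← Finset.add_sum_erase _ _ (Finset.mem_univ i0), Finset.erase_eq]
  omega
end Aux6

section Aux7
variable {V : Type*} [Fintype V] [DecidableEq V] {G : SimpleGraph V}

lemma blob_split {k : ℕ} [NeZero k] (hk : 4 ≤ k) (p2 : 2 < k) (S : Fin k → Finset V)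
    (hB : BlobSys G k S)
    (x : V) (M' : Finset V) (hx : x ∈ S 1) (hM'sub : M' ⊆ (S 1).erase x)
    (hconn' : IsConnSub G M')
    (hLx : Touch G (S 0) {x}) (hxM' : Touch G {x} M')
    (hM'R : Touch G M' (S ⟨2, p2⟩))
    (hLM' : ¬ Touch G (S 0) M') (hxR : ¬ Touch G {x} (S ⟨2, p2⟩)) :
    ∃ T : Fin (k + 1) → Finset V, BlobSys G (k + 1) T ∧
      ∑ i, (T i).card + (S 1).card = ∑ i, (S i).card + 1 + M'.card := by
  classical
  have h2k : 2 ≤ k := by omega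
  have hM'M : M' ⊆ S 1 := hM'sub.trans (Finset.erase_subset _ _)
  have htv := blob_touch_val hk hB
  have hfv := blob_far_val hk hB
  set T : Fin (k + 1) → Finset V := fun j =>
    if (j : ℕ) = 1 then {x} else if (j : ℕ) = 2 then M'
    else S ⟨(if (j : ℕ) = 0 then 0 else (j : ℕ) - 1),
      by have := j.isLt; split <;> omega⟩ with hT
  have hSmk : ∀ (a b : ℕ) (ha : a < k) (hb : b < k), a = b → S ⟨a, ha⟩ = S ⟨b, hb⟩ := by
    intro a b ha hb h; subst h; rfl
  have hTval : ∀ (n : ℕ) (hn : n < k + 1), T ⟨n, hn⟩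
      = if n = 1 then {x} else if n = 2 then M'
        else S ⟨(if n = 0 then 0 else n - 1), by split <;> omega⟩ := fun n hn => rfl
  have hT1 : ∀ (hn : 1 < k + 1), T ⟨1, hn⟩ = {x} := by
    intro hn; rw [hTval, if_pos rfl]
  have hT2 : ∀ (hn : 2 < k + 1), T ⟨2, hn⟩ = M' := by
    intro hn; rw [hTval, if_neg (by omega), if_pos rfl]
  have hT0 : ∀ (hn : 0 < k + 1) (p : 0 < k), T ⟨0, hn⟩ = S ⟨0, p⟩ := by
    intro hn p
    rw [hTval, if_neg (by omega), if_neg (by omega)]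
    exact hSmk _ _ _ _ (by rw [if_pos rfl])
  have hTn : ∀ (n : ℕ) (h3 : 3 ≤ n) (hn : n < k + 1) (p : n - 1 < k),
      T ⟨n, hn⟩ = S ⟨n - 1, p⟩ := by
    intro n h3 hn p
    rw [hTval, if_neg (by omega), if_neg (by omega)]
    exact hSmk _ _ _ _ (by rw [if_neg (by omega)])
  have hS0 : ∀ (p : 0 < k), S 0 = S ⟨0, p⟩ := fun p => congrArg S (fin_zero_eq hk p)
  have hS1 : ∀ (p : 1 < k), S 1 = S ⟨1, p⟩ := fun p => congrArg S (fin_one_eq hk p)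
  refine ⟨T, blobSys_of_val (by omega) T ?_ ?_ ?_ ?_, ?_⟩
  · -- connectivity
    intro i
    rw [show T i = T ⟨(i : ℕ), i.isLt⟩ from rfl, hTval]
    split_ifs with u1 u2 u3
    · exact isConnSub_singleton G x
    · exact hconn'
    · exact hB.1 _
    · exact hB.1 _
  · -- consecutive touches
    intro a h pa
    rcases Nat.lt_or_ge a 3 with h3 | h3
    · interval_cases a
      · rw [hT0 pa (by omega), hT1 h]
        have h' := hLx
        rw [hS0 (by omega)] at h'
        exact h'
      · rw [hT1 pa, hT2 h]; exact hxM'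
      · rw [hT2 pa, hTn 3 (by omega) h (by omega)]
        have h' := hM'R
        rw [hSmk 2 2 p2 (by omega) rfl] at h'
        exact h'
    · rw [hTn a h3 pa (by omega), hTn (a + 1) (by omega) h (by omega)]
      have h' := htv.1 (a - 1) (by omega : a - 1 + 1 < k) (by omega)
      rw [hSmk (a - 1) (a - 1) _ (by omega) rfl,
        hSmk (a - 1 + 1) (a + 1 - 1) (by omega) (by omega) (by omega)] at h'
      exact h'
  · -- wrap touch
    intro p q
    rw [hTn (k + 1 - 1) (by omega) p (by omega), hT0 q (by omega)]
    have h' := htv.2 (by omega) (by omega)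
    rw [hSmk (k - 1) (k + 1 - 1 - 1) (by omega) (by omega) (by omega)] at h'
    exact h'
  · -- far pairs
    have key : ∀ (a b : ℕ) (ha : a < k + 1) (hb : b < k + 1), a < b → b ≠ a + 1 →
        ¬(a = 0 ∧ b = k) → ¬ Touch G (T ⟨a, ha⟩) (T ⟨b, hb⟩) := by
      intro a b ha hb hab hne1 hwrap
      have hb2 : a + 2 ≤ b := by omega
      rcases Nat.lt_or_ge a 3 with ha3 | ha3
      · interval_cases a
        · -- a = 0 : L
          rw [hT0 ha (by omega)]
          by_cases hb2' : b = 2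
          · subst hb2'
            rw [hT2 hb]
            intro ht
            apply hLM'
            rwa [hS0 (by omega)]
          · have hb3 : 3 ≤ b := by omega
            have hbk : b ≠ k := fun h => hwrap ⟨rfl, h⟩
            rw [hTn b hb3 hb (by omega)]
            exact hfv 0 (b - 1) _ _ (by omega) (by omega) (by omega) (by omega) (by omega)
        · -- a = 1 : {x}
          rw [hT1 ha]
          by_cases hb3' : b = 3
          · subst hb3'
            rw [hTn 3 (by omega) hb (by omega)]
            intro ht
            apply hxR
            rwa [hSmk 2 2 p2 (by omega) rfl]
          · have hb4 : 4 ≤ b := by omega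
            rw [hTn b (by omega) hb (by omega)]
            intro ht
            refine hfv 1 (b - 1) (by omega) (by omega) (by omega) (by omega) (by omega)
              (by omega) (by omega) ?_
            refine ht.mono ?_ le_rfl
            rw [← hS1 (by omega)]
            exact Finset.singleton_subset_iff.mpr hx
        · -- a = 2 : M'
          have hb4 : 4 ≤ b := by omega
          rw [hT2 ha, hTn b (by omega) hb (by omega)]
          intro ht
          refine hfv 1 (b - 1) (by omega) (by omega) (by omega) (by omega) (by omega)
            (by omega) (by omega) ?_
          refine ht.mono ?_ le_rfl
          rw [← hS1 (by omega)]
          exact hM'M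
      · -- a ≥ 3 : both old
        rw [hTn a ha3 ha (by omega), hTn b (by omega) hb (by omega)]
        exact hfv (a - 1) (b - 1) _ _ (by omega) (by omega) (by omega) (by omega) (by omega)
    intro a b ha hb hba hb1 ha1 hw1 hw2
    rcases lt_trichotomy a b with h | h | h
    · exact key a b ha hb h hb1 (by simpa using hw1)
    · exact absurd h.symm hba
    · intro ht
      exact key b a hb ha h ha1 (by simpa using hw2) ht.symm
  · -- sum computation
    have hsum : ∀ (m : ℕ) (f : Fin m → Finset V),
        ∑ i, (f i).card = ∑ n ∈ Finset.range m,
          (if h : n < m then (f ⟨n, h⟩).card else 0) := by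
      intro m f
      rw [← Fin.sum_univ_eq_sum_range]
      refine Finset.sum_congr rfl fun i _ => ?_
      rw [dif_pos i.isLt]
    rw [hsum _ T, hsum _ S]
    have hrT : Finset.range (k + 1) = Finset.range 3 ∪ Finset.Ico 3 (k + 1) := by
      rw [Finset.range_eq_Ico, Finset.range_eq_Ico, Finset.Ico_union_Ico_eq_Ico (by omega) (by omega)]
    have hrS : Finset.range k = Finset.range 2 ∪ Finset.Ico 2 k := by
      rw [Finset.range_eq_Ico, Finset.range_eq_Ico, Finset.Ico_union_Ico_eq_Ico (by omega) (by omega)]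
    have hd1 : Disjoint (Finset.range 3) (Finset.Ico 3 (k + 1)) := by
      rw [Finset.range_eq_Ico]; exact Finset.Ico_disjoint_Ico_consecutive 0 3 (k + 1)
    have hd2 : Disjoint (Finset.range 2) (Finset.Ico 2 k) := by
      rw [Finset.range_eq_Ico]; exact Finset.Ico_disjoint_Ico_consecutive 0 2 k
    rw [hrT, hrS, Finset.sum_union hd1, Finset.sum_union hd2]
    have hmid : ∑ n ∈ Finset.Ico 3 (k + 1), (if h : n < k + 1 then (T ⟨n, h⟩).card else 0)
        = ∑ n ∈ Finset.Ico 2 k, (if h : n < k then (S ⟨n, h⟩).card else 0) := by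
      rw [Finset.sum_Ico_eq_sum_range, Finset.sum_Ico_eq_sum_range]
      refine Finset.sum_congr (by rw [show k + 1 - 3 = k - 2 from by omega]) fun l hl => ?_
      rw [Finset.mem_range] at hl
      rw [dif_pos (show 3 + l < k + 1 by omega), dif_pos (show 2 + l < k by omega)]
      rw [hTn (3 + l) (by omega) (by omega) (by omega)]
      rw [hSmk (3 + l - 1) (2 + l) (by omega) (by omega) (by omega)]
    rw [hmid]
    have hr3 : ∑ n ∈ Finset.range 3, (if h : n < k + 1 then (T ⟨n, h⟩).card else 0)
        = (S ⟨0, by omega⟩).card + 1 + M'.card := by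
      rw [Finset.sum_range_succ, Finset.sum_range_succ, Finset.sum_range_one]
      rw [dif_pos (show 0 < k + 1 by omega), dif_pos (show 1 < k + 1 by omega),
        dif_pos (show 2 < k + 1 by omega)]
      rw [hT0 (by omega) (by omega), hT1 (by omega), hT2 (by omega), Finset.card_singleton]
    have hr2 : ∑ n ∈ Finset.range 2, (if h : n < k then (S ⟨n, h⟩).card else 0)
        = (S ⟨0, by omega⟩).card + (S 1).card := by
      rw [Finset.sum_range_succ, Finset.sum_range_one]
      rw [dif_pos (show 0 < k by omega), dif_pos (show 1 < k by omega)]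
      rw [← hS1 (by omega), hSmk 0 0 _ (by omega) rfl]
    rw [hr3, hr2]
    omega
end Aux7

section Aux8
variable {V : Type*} [Fintype V] [DecidableEq V] {G : SimpleGraph V}

lemma blob_step {k : ℕ} [NeZero k] (hk : 4 ≤ k) (S : Fin k → Finset V) (hB : BlobSys G k S)
    (h2 : 2 ≤ (S 1).card) :
    (∃ S2 : Fin k → Finset V, BlobSys G k S2 ∧ ∑ i, (S2 i).card + 1 ≤ ∑ i, (S i).card) ∨
    (∃ T : Fin (k + 1) → Finset V, BlobSys G (k + 1) T ∧
      ∑ i, (T i).card ≤ ∑ i, (S i).card) := by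
  classical
  have p2 : 2 < k := by omega
  have e11 : (1 + 1 : Fin k) = ⟨2, p2⟩ := fin_one_add_one hk p2
  have hL : Touch G (S 0) (S 1) := by have := hB.2.1 0; rwa [zero_add] at this
  have hMR : Touch G (S 1) (S ⟨2, p2⟩) := by have := hB.2.1 1; rwa [e11] at this
  -- extract contact x with L
  obtain ⟨x, hxM, hLx⟩ : ∃ x, x ∈ S 1 ∧ Touch G (S 0) {x} := by
    rcases hL with ⟨v, hv1, hv2⟩ | ⟨a, ha, b, hb, hadj⟩
    · exact ⟨v, hv2, Or.inl ⟨v, hv1, Finset.mem_singleton_self v⟩⟩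
    · exact ⟨b, hb, Or.inr ⟨a, ha, b, Finset.mem_singleton_self b, hadj⟩⟩
  by_cases hxR : Touch G {x} (S ⟨2, p2⟩)
  · left
    refine ⟨Function.update S 1 {x},
      blob_shrink hk p2 S hB {x} (Finset.singleton_subset_iff.mpr hxM)
        (isConnSub_singleton G x) hLx hxR, ?_⟩
    have := sum_update_card S {x} 1
    rw [Finset.card_singleton] at this
    omega
  · -- extract contact y with R, y ≠ x
    obtain ⟨y, hyM, hyR⟩ : ∃ y, y ∈ S 1 ∧ Touch G {y} (S ⟨2, p2⟩) := by
      rcases hMR with ⟨v, hv1, hv2⟩ | ⟨a, ha, b, hb, hadj⟩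
      · exact ⟨v, hv1, Or.inl ⟨v, Finset.mem_singleton_self v, hv2⟩⟩
      · exact ⟨a, ha, Or.inr ⟨a, Finset.mem_singleton_self a, b, hb, hadj⟩⟩
    have hyx : y ≠ x := fun h => hxR (h ▸ hyR)
    obtain ⟨M', hM'sub, hyM', hconn', z, hzM', hzx⟩ :=
      exists_component (S 1) (hB.1 1) x y hxM hyM hyx
    have hM'R : Touch G M' (S ⟨2, p2⟩) :=
      hyR.mono (Finset.singleton_subset_iff.mpr hyM') le_rfl
    have hxM' : Touch G {x} M' :=
      Or.inr ⟨x, Finset.mem_singleton_self x, z, hzM', hzx.symm⟩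
    have hcard : M'.card + 1 ≤ (S 1).card := by
      have h1 : M'.card ≤ ((S 1).erase x).card := Finset.card_le_card hM'sub
      rw [Finset.card_erase_of_mem hxM] at h1
      omega
    by_cases hLM' : Touch G (S 0) M'
    · left
      refine ⟨Function.update S 1 M',
        blob_shrink hk p2 S hB M' (hM'sub.trans (Finset.erase_subset _ _)) hconn' hLM' hM'R, ?_⟩
      have := sum_update_card S M' 1
      omega
    · right
      obtain ⟨T, hBT, hsum⟩ :=
        blob_split hk p2 S hB x M' hxM hM'sub hconn' hLx hxM' hM'R hLM' hxR
      exact ⟨T, hBT, by omega⟩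

lemma blob_false (hch : ∀ ℓ : ℕ, 4 ≤ ℓ → IsEmpty (SimpleGraph.cycleGraph ℓ ↪g G)) :
    ∀ μ k : ℕ, 4 ≤ k → ∀ [NeZero k], ∀ S : Fin k → Finset V, BlobSys G k S →
      ∑ i, (S i).card ≤ μ + k → False := by
  have hbase : ∀ (k : ℕ), 4 ≤ k → ∀ [NeZero k], ∀ S : Fin k → Finset V, BlobSys G k S →
      (∀ i, (S i).card = 1) → False := by
    intro k hk _ S hB hall
    exact (hch k hk).false (blob_base hk S hB hall).some
  intro μ
  induction μ with
  | zero =>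
    intro k hk _ S hB hsz
    refine hbase k hk S hB (fun i => ?_)
    have h1 : ∀ j : Fin k, 1 ≤ (S j).card :=
      fun j => Finset.card_pos.mpr (hB.1 j).nonempty
    by_contra hne
    have hlt : ∑ j : Fin k, (1 : ℕ) < ∑ j, (S j).card := by
      refine Finset.sum_lt_sum (fun j _ => h1 j) ⟨i, Finset.mem_univ i, ?_⟩
      have := h1 i; omega
    simp only [Finset.sum_const, Finset.card_univ, Fintype.card_fin, smul_eq_mul,
      mul_one] at hlt
    omega
  | succ μ ih =>
    intro k hk _ S hB hsz
    by_cases hall : ∀ i, (S i).card = 1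
    · exact hbase k hk S hB hall
    · push_neg at hall
      obtain ⟨i0, hi0⟩ := hall
      have h2 : 2 ≤ (S i0).card := by
        have := Finset.card_pos.mpr (hB.1 i0).nonempty
        omega
      set c : Fin k := i0 - 1 with hc
      have hB' := hB.rotate hk c
      have hS'1 : S (1 + c) = S i0 := by
        congr 1
        rw [hc, add_comm, sub_add_cancel]
      have hsum' : ∑ i : Fin k, (S (i + c)).card = ∑ i, (S i).card :=
        Fintype.sum_equiv (Equiv.addRight c) _ _ (fun i => rfl)
      rcases blob_step hk (fun i => S (i + c)) hB'
        (by show 2 ≤ (S (1 + c)).card; rw [hS'1]; exact h2) with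
        ⟨S2, hB2, hle⟩ | ⟨T, hBT, hle⟩
      · exact ih k hk S2 hB2 (by omega)
      · exact ih (k + 1) (by omega) T hBT (by omega)

end Aux8

/-- If `G` is chordal (no induced cycle of length at least 4), then for

any `A, B ⊆ V(G)` the CC-Piran graph `Π^cc(A, B)` is even-hole-free. -/
theorem stmt14 {V : Type*} [Fintype V] [DecidableEq V] (G : SimpleGraph V)
    (hchordal : ∀ ℓ : ℕ, 4 ≤ ℓ → IsEmpty (SimpleGraph.cycleGraph ℓ ↪g G))
    (A B : Finset V) :
    ∀ ℓ : ℕ, 4 ≤ ℓ → Even ℓ → IsEmpty (SimpleGraph.cycleGraph ℓ ↪g ccPiran G A B) := by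
  intro ℓ hℓ _
  haveI : NeZero ℓ := ⟨by omega⟩
  constructor
  intro f
  set S : Fin ℓ → Finset V := fun i => ((f i) : {C : Finset V // C ∈ ccPiranVerts G A B}).1
    with hS
  have hv1 : ((1 : Fin ℓ) : ℕ) = 1 := fin_val_one (by omega)
  have hmem : ∀ i, (f i).1 ∈ ccPiranVerts G A B := fun i => (f i).2
  have hcomp : ∀ i : Fin ℓ, (f i).1 ∈ comps G A ∨ (f i).1 ∈ comps G B := by
    intro i
    rcases Finset.mem_union.mp (hmem i) with h | h
    · exact Or.inl (Finset.mem_sdiff.mp h).1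
    · exact Or.inr (Finset.mem_sdiff.mp h).1
  have hconn : ∀ i, IsConnSub G (S i) := by
    intro i
    rcases hcomp i with h | h <;> exact (mem_comps_iff.mp h).2.1
  have htouch : ∀ i : Fin ℓ, Touch G (S i) (S (i + 1)) := by
    intro i
    have hcyc : (SimpleGraph.cycleGraph ℓ).Adj i (i + 1) := by
      rw [SimpleGraph.cycleGraph_adj']
      right
      rw [add_sub_cancel_left, hv1]
    have hadj : (ccPiran G A B).Adj (f i) (f (i + 1)) := f.map_adj_iff.mpr hcyc
    exact touch_of_isConnSub_union (hconn i).nonempty (hconn (i + 1)).nonempty hadj.2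
  have hfar : ∀ i j : Fin ℓ, j ≠ i → j ≠ i + 1 → i ≠ j + 1 → ¬ Touch G (S i) (S j) := by
    intro i j hji hj1 hi1 ht
    have hne : f i ≠ f j := fun h => hji (f.injective h).symm
    have hCne : (f i).1 ≠ (f j).1 := fun h => hne (Subtype.ext h)
    have hnadj : ¬ (ccPiran G A B).Adj (f i) (f j) := by
      rw [f.map_adj_iff, SimpleGraph.cycleGraph_adj']
      rintro (h | h)
      · have h2 : i - j = 1 := Fin.ext (by rw [h, hv1])
        have h3 : i = 1 + j := sub_eq_iff_eq_add.mp h2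
        exact hi1 (by rw [h3, add_comm])
      · have h2 : j - i = 1 := Fin.ext (by rw [h, hv1])
        have h3 : j = 1 + i := sub_eq_iff_eq_add.mp h2
        exact hj1 (by rw [h3, add_comm])
    have hunion : IsConnSub G ((f i).1 ∪ (f j).1) :=
      (hconn i).union_of_touch (hconn j) ht
    rcases Finset.mem_union.mp (hmem i) with hi | hi <;>
      rcases Finset.mem_union.mp (hmem j) with hj | hj
    · exact comps_not_touch (Finset.mem_sdiff.mp hi).1 (Finset.mem_sdiff.mp hj).1 hCne ht
    · exact hnadj ⟨Or.inl ⟨hi, hj⟩, hunion⟩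
    · exact hnadj ⟨Or.inr ⟨hj, hi⟩, hunion⟩
    · exact comps_not_touch (Finset.mem_sdiff.mp hi).1 (Finset.mem_sdiff.mp hj).1 hCne ht
  exact blob_false hchordal (∑ i, (S i).card) ℓ hℓ S ⟨hconn, htouch, hfar⟩ (by omega)
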